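/- For every real a with 0 ≤ a ≤ 1 and every real x > 0, one has (1 + 1/x)^a ≥ 1 + a/(x + (1-a)/2). -/

import Mathlib

open Real Set

private lemma key_lemma (a : ℝ) (ha0 : 0 ≤ a) (ha1 : a ≤ 1) {v : ℝ} (hv : 1 ≤ v) :
    (1 + a) * v + (1 - a) ≤ (1 - a) * v ^ (1 + a) + (1 + a) * v ^ a := by
  set G : ℝ → ℝ := fun w => (1 - a) * w ^ (1 + a) + (1 + a) * w ^ a - (1 + a) * w with hG
  have hderiv : ∀ w : ℝ, 1 < w → HasDerivAt G
      ((1 - a) * ((1 + a) * w ^ (1 + a - 1)) + (1 + a) * (a * w ^ (a - 1)) - (1 + a)) w := by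
    intro w hw
    have hw0 : w ≠ 0 := by positivity
    have h1 : HasDerivAt (fun x : ℝ => x ^ (1 + a)) ((1 + a) * w ^ (1 + a - 1)) w :=
      Real.hasDerivAt_rpow_const (Or.inl hw0)
    have h2 : HasDerivAt (fun x : ℝ => x ^ a) (a * w ^ (a - 1)) w :=
      Real.hasDerivAt_rpow_const (Or.inl hw0)
    have h3 : HasDerivAt (fun x : ℝ => (1 + a) * x) ((1 + a) * 1) w :=
      (hasDerivAt_id w).const_mul (1 + a)
    have h4 := ((h1.const_mul (1 - a)).add (h2.const_mul (1 + a))).sub h3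
    rw [mul_one] at h4
    exact h4
  have hmono : MonotoneOn G (Ici 1) := by
    apply monotoneOn_of_deriv_nonneg (convex_Ici 1)
    · intro w hw
      have hw0 : w ≠ 0 := by simp at hw; positivity
      exact ContinuousAt.continuousWithinAt <| by
        exact (((Real.continuousAt_rpow_const w (1+a) (Or.inl hw0)).const_smul (1-a)).add
          ((Real.continuousAt_rpow_const w a (Or.inl hw0)).const_smul (1+a))).sub
          (continuousAt_id.const_smul (1+a))
    · intro w hw
      rw [interior_Ici] at hw
      exact ((hderiv w hw).differentiableAt).differentiableWithinAt
    · intro w hw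
      rw [interior_Ici] at hw
      rw [(hderiv w hw).deriv]
      have hw0 : (0:ℝ) < w := lt_trans one_pos hw
      -- AM-GM: (1-a) * w^a + a * w^(a-1) ≥ (w^a)^(1-a) * (w^(a-1))^a = 1
      have hamgm : (1:ℝ) ≤ (1 - a) * w ^ a + a * w ^ (a - 1) := by
        have h := Real.geom_mean_le_arith_mean2_weighted (by linarith : (0:ℝ) ≤ 1 - a) ha0
          (Real.rpow_nonneg hw0.le a) (Real.rpow_nonneg hw0.le (a - 1)) (by ring)
        calc (1:ℝ) = (w ^ a) ^ (1 - a) * (w ^ (a - 1)) ^ a := by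
              rw [← Real.rpow_mul hw0.le, ← Real.rpow_mul hw0.le, ← Real.rpow_add hw0,
                show a * (1 - a) + (a - 1) * a = 0 by ring, Real.rpow_zero]
          _ ≤ (1 - a) * w ^ a + a * w ^ (a - 1) := h
      have he : 1 + a - 1 = a := by ring
      rw [he]
      nlinarith [Real.rpow_nonneg hw0.le a, Real.rpow_nonneg hw0.le (a-1)]
  have h1 : G 1 ≤ G v := hmono (by simp) hv hv
  have hG1 : G 1 = 1 - a := by simp [hG]
  have hGv : G v = (1 - a) * v ^ (1 + a) + (1 + a) * v ^ a - (1 + a) * v := rfl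
  linarith [hG1 ▸ h1, hGv ▸ h1]

theorem rpow_ineq_four (a x : ℝ) (ha0 : 0 ≤ a) (ha1 : a ≤ 1) (hx : 0 < x) :
    (1 + 1 / x) ^ a ≥ 1 + a / (x + (1 - a) / 2) := by
  set v : ℝ := 1 + 1 / x with hv
  have hv1 : (1:ℝ) ≤ v := by
    have : 0 < 1 / x := by positivity
    simp [hv]; linarith
  have hv0 : (0:ℝ) < v := lt_of_lt_of_le one_pos hv1
  have key := key_lemma a ha0 ha1 hv1
  have hpow : v ^ a * ((1 - a) * v + (1 + a)) = (1 - a) * v ^ (1 + a) + (1 + a) * v ^ a := by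
    have : v ^ a * v = v ^ (1 + a) := by
      rw [add_comm, Real.rpow_add hv0, Real.rpow_one]
    nlinarith [this]
  have hden : (0:ℝ) < (1 - a) * v + (1 + a) := by nlinarith
  have hdiv : ((1 + a) * v + (1 - a)) / ((1 - a) * v + (1 + a)) ≤ v ^ a := by
    rw [div_le_iff₀ hden, hpow]; exact key
  have hd2 : (0:ℝ) < x + (1 - a) / 2 := by linarith
  have heq : ((1 + a) * v + (1 - a)) / ((1 - a) * v + (1 + a)) = 1 + a / (x + (1 - a) / 2) := by
    rw [div_eq_iff hden.ne', hv]
    have hxne : x ≠ 0 := hx.ne'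
    have h5 : 1 - a + x * 2 ≠ 0 := by nlinarith
    field_simp [h5]
    linear_combination (-2*a) * (mul_inv_cancel₀ h5)
  rw [ge_iff_le, ← heq]
  exact hdiv
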